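/- arXiv:1004.3931 — 3 statements merged into one kernel-verified Lean document; each statement's English description precedes it below -/
import Mathlib

section
/- Let λ₁,…,λ_k be nonzero complex numbers, let Λ := max_j |λ_j| and c := 1/(2Λ). For every a = (a₁,…,a_k) ∈ ℂᵏ with 0 < ‖a‖ < 1 (where ‖a‖ := max_j |a_j|), define τ : 𝔻 → ℂᵏ by τ(ξ) := (a₁·exp(−c·(log‖a‖)·λ₁·ξ), …, a_k·exp(−c·(log‖a‖)·λ_k·ξ)). Then τ is holomorphic, τ(0) = a, τ maps the unit disc 𝔻 into the open unit polydisc 𝔻ᵏ = {z : |z_j| < 1 for all j}, τ satisfies the differential equation τ′(ξ) = −c·(log‖a‖)·F(τ(ξ)) where F(z) := (λ₁z₁,…,λ_k z_k) (so the image of τ lies in the integral curve of the generic linear vector field F through a), and ‖τ′(0)‖ ≥ c·(min_j |λ_j|)·‖a‖·|log‖a‖|. -/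
open Metric

/-- Lemma 4.3: for the generic linear vector field
`F(z) = (λ₁z₁, …, λ_k z_k)` with all `λ_j ≠ 0`, `Λ := max |λ_j|`, `c := 1/(2Λ)`, and any
`a` with `0 < ‖a‖ < 1` (sup norm), the map
`τ(ξ) := (a_j · exp(−c·log‖a‖·λ_j·ξ))_j` is holomorphic, sends `0` to `a`, maps the unit
disc into the unit polydisc, solves `τ′ = −c·log‖a‖·F(τ)`, and satisfies
`‖τ′(0)‖ ≥ c·(min_j |λ_j|)·‖a‖·|log‖a‖|`. -/
theorem holomorphic_disc_in_leaf_of_generic_linear_vector_field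
    (k : ℕ) (hk : 1 ≤ k) (l : Fin k → ℂ) (hl : ∀ j, l j ≠ 0)
    (Λ c : ℝ) (hΛ : Λ = ⨆ j, ‖l j‖) (hc : c = 1 / (2 * Λ))
    (a : Fin k → ℂ) (ha0 : 0 < ‖a‖) (ha1 : ‖a‖ < 1)
    (τ : ℂ → Fin k → ℂ)
    (hτ : τ = fun ξ j => a j * Complex.exp (-(c * Real.log ‖a‖) * l j * ξ)) :
    Differentiable ℂ τ ∧
    τ 0 = a ∧
    (∀ ξ ∈ ball (0 : ℂ) 1, ∀ j, ‖τ ξ j‖ < 1) ∧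
    (∀ ξ : ℂ, deriv τ ξ = fun j => -(c * Real.log ‖a‖) * (l j * τ ξ j)) ∧
    c * (⨅ j, ‖l j‖) * ‖a‖ * |Real.log ‖a‖| ≤ ‖deriv τ 0‖ := by
  have hk' : Nonempty (Fin k) := ⟨⟨0, hk⟩⟩
  set μ : Fin k → ℂ := fun j => -(c * Real.log ‖a‖) * l j with hμ
  have hΛle : ∀ j, ‖l j‖ ≤ Λ := by
    intro j
    rw [hΛ]
    exact le_ciSup (f := fun j => ‖l j‖)
      (Set.Finite.bddAbove (Set.finite_range _)) j
  have hΛpos : 0 < Λ := lt_of_lt_of_le (by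
    simpa using (norm_pos_iff.mpr (hl ⟨0, hk⟩))) (hΛle ⟨0, hk⟩)
  have hcpos : 0 < c := by rw [hc]; positivity
  have hlog : Real.log ‖a‖ < 0 := Real.log_neg ha0 ha1
  set L : ℝ := -Real.log ‖a‖ with hL
  have hLpos : 0 < L := by simpa [hL] using hlog
  have habsL : |Real.log ‖a‖| = L := abs_of_neg hlog
  have hμabs : ∀ j, ‖μ j‖ = c * L * ‖l j‖ := by
    intro j
    have : -(c * Real.log ‖a‖) = ((c * L : ℝ) : ℂ) := by
      push_cast [hL]; ring
    rw [hμ]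
    simp only [norm_mul, this]
    rw [Complex.norm_real, Real.norm_eq_abs, abs_of_pos (by positivity)]
  -- derivative
  have hder : ∀ ξ, HasDerivAt τ (fun j => μ j * τ ξ j) ξ := by
    intro ξ
    rw [hasDerivAt_pi]
    intro j
    have h1 : HasDerivAt (fun ξ : ℂ => μ j * ξ) (μ j) ξ := by
      simpa using (hasDerivAt_id ξ).const_mul (μ j)
    have h2 := (h1.cexp).const_mul (a j)
    rw [hτ]
    convert h2 using 1
    · rfl
    simp [hμ]; ring
  have hdiff : Differentiable ℂ τ := fun ξ => (hder ξ).differentiableAt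
  have hderiv : ∀ ξ, deriv τ ξ = fun j => μ j * τ ξ j := fun ξ => (hder ξ).deriv
  have hτ0 : τ 0 = a := by
    rw [hτ]; funext j; simp
  refine ⟨hdiff, hτ0, ?_, ?_, ?_⟩
  · -- maps disc into polydisc
    intro ξ hξ j
    have hξ1 : ‖ξ‖ < 1 := by simpa using hξ
    have hbound : ‖τ ξ j‖ ≤ ‖a‖ * Real.exp (L / 2) := by
      rw [hτ]
      simp only [norm_mul, Complex.norm_exp]
      have h1 : ‖a j‖ ≤ ‖a‖ := by
        simpa using norm_le_pi_norm a j
      have h2 : (-(↑c * ↑(Real.log ‖a‖)) * l j * ξ).re ≤ L / 2 := by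
        calc (-(↑c * ↑(Real.log ‖a‖)) * l j * ξ).re
            ≤ ‖-(↑c * ↑(Real.log ‖a‖)) * l j * ξ‖ := Complex.re_le_norm _
          _ = ‖μ j‖ * ‖ξ‖ := by rw [hμ]; simp [map_mul]
          _ ≤ (c * L * Λ) * 1 := by
              rw [hμabs j]
              exact mul_le_mul
                (mul_le_mul_of_nonneg_left (hΛle j) (by positivity))
                hξ1.le (norm_nonneg ξ) (by positivity)
          _ = L / 2 := by rw [hc]; field_simp
      exact mul_le_mul h1 (Real.exp_le_exp.mpr h2) (Real.exp_nonneg _) ha0.le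
    have h3 : ‖a‖ * Real.exp (L / 2) < 1 := by
      have e1 : ‖a‖ * Real.exp (L / 2) = ‖a‖ ^ ((1:ℝ)/2) := by
        rw [Real.rpow_def_of_pos ha0, hL]
        nth_rewrite 1 [← Real.exp_log ha0]
        rw [← Real.exp_add]
        congr 1
        ring
      rw [e1]
      exact Real.rpow_lt_one ha0.le ha1 (by norm_num)
    exact lt_of_le_of_lt hbound h3
  · intro ξ
    rw [hderiv ξ]
    funext j
    rw [hμ]; ring
  · -- lower bound on the derivative at 0
    obtain ⟨j0, -, hj0⟩ := Finset.exists_mem_eq_sup (Finset.univ : Finset (Fin k))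
      (Finset.univ_nonempty) (fun j => ‖a j‖₊)
    have hnorm : ‖a‖ = ‖a j0‖ := by
      have : ‖a‖₊ = ‖a j0‖₊ := by rw [Pi.nnnorm_def, hj0]
      calc ‖a‖ = (‖a‖₊ : ℝ) := rfl
        _ = (‖a j0‖₊ : ℝ) := by rw [this]
        _ = ‖a j0‖ := rfl
    have hcomp : ‖deriv τ 0 j0‖ ≤ ‖deriv τ 0‖ := by
      simpa using norm_le_pi_norm (deriv τ 0) j0
    have hval : ‖deriv τ 0 j0‖ = c * L * ‖l j0‖ * ‖a‖ := by
      rw [hderiv 0, hτ0]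
      simp only [norm_mul, hμabs j0, hnorm]
    have hinf : (⨅ j, ‖l j‖) ≤ ‖l j0‖ :=
      ciInf_le (Set.Finite.bddBelow (Set.finite_range _)) j0
    have hinf0 : 0 ≤ ⨅ j, ‖l j‖ :=
      le_ciInf fun j => norm_nonneg _
    calc c * (⨅ j, ‖l j‖) * ‖a‖ * |Real.log ‖a‖|
        = c * (⨅ j, ‖l j‖) * ‖a‖ * L := by rw [habsL]
      _ ≤ c * ‖l j0‖ * ‖a‖ * L :=
          mul_le_mul_of_nonneg_right (mul_le_mul_of_nonneg_right
            (mul_le_mul_of_nonneg_left hinf hcpos.le) ha0.le) hLpos.le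
      _ = c * L * ‖l j0‖ * ‖a‖ := by ring
      _ = ‖deriv τ 0 j0‖ := hval.symm
      _ ≤ ‖deriv τ 0‖ := hcomp
end

section
/- There is a constant C > 0 such that for every r ∈ [1/2, 1), with R := log((1+r)/(1−r)) and M_R := ∫_𝔻 log⁺(r/|ζ|)·4/(1−|ζ|²)² dA(ζ), and for every measurable function u : 𝔻 → [0,1], one has | (1/M_R)·∫_{|ζ|<r} log(r/|ζ|)·u(ζ)·4/(1−|ζ|²)² dA(ζ) − (1/M_R)·∫_{|ζ|<r} log(1/|ζ|)·u(ζ)·4/(1−|ζ|²)² dA(ζ) | ≤ C/R. -/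
open MeasureTheory Real Set
lemma contPolarSymm : Continuous (fun p : ℝ × ℝ => Complex.polarCoord.symm p) := by
  simp only [Complex.polarCoord_symm_apply]
  fun_prop

lemma volume_line : volume {z : ℂ | z.im = 0} = 0 := by
  have h : {z : ℂ | z.im = 0} = Complex.measurableEquivRealProd ⁻¹' ((Set.univ : Set ℝ) ×ˢ ({0} : Set ℝ)) := by
    ext z
    simp [Complex.measurableEquivRealProd_apply, eq_comm]
  rw [h, Complex.volume_preserving_equiv_real_prod.measure_preimage
    ((MeasurableSet.univ.prod (measurableSet_singleton 0)).nullMeasurableSet)]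
  rw [show (volume : Measure (ℝ × ℝ)) = (volume : Measure ℝ).prod volume from Measure.volume_eq_prod ℝ ℝ]
  rw [Measure.prod_prod]
  simp

lemma volume_T_lt_top {r : ℝ} :
    volume (Ioo (0:ℝ) r ×ˢ Ioo (-π) π) < ⊤ := by
  rw [show (volume : Measure (ℝ × ℝ)) = (volume : Measure ℝ).prod volume from
    Measure.volume_eq_prod ℝ ℝ, Measure.prod_prod, Real.volume_Ioo, Real.volume_Ioo]
  exact ENNReal.mul_lt_top ENNReal.ofReal_lt_top ENNReal.ofReal_lt_top

lemma T_subset {r : ℝ} : (Ioo (0:ℝ) r ×ˢ Ioo (-π) π) ⊆ polarCoord.target := by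
  rw [polarCoord_target]
  exact Set.prod_mono Ioo_subset_Ioi_self subset_rfl

lemma image_polar {r : ℝ} :
    Complex.polarCoord.symm '' (Ioo (0:ℝ) r ×ˢ Ioo (-π) π)
      = Metric.ball (0:ℂ) r ∩ Complex.slitPlane := by
  ext z
  constructor
  · rintro ⟨⟨s, θ⟩, ⟨hs, hθ⟩, rfl⟩
    have hmem : ((s, θ) : ℝ × ℝ) ∈ Complex.polarCoord.target := by
      rw [Complex.polarCoord_target]
      exact ⟨hs.1, hθ⟩
    refine ⟨?_, Complex.polarCoord.map_target hmem⟩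
    rw [mem_ball_zero_iff, Complex.norm_polarCoord_symm,
      abs_of_pos hs.1]
    exact hs.2
  · rintro ⟨hball, hslit⟩
    have hzsrc : z ∈ Complex.polarCoord.source := by
      rw [Complex.polarCoord_source]; exact hslit
    have htar := Complex.polarCoord.map_source hzsrc
    rw [Complex.polarCoord_target, Complex.polarCoord_apply] at htar
    refine ⟨Complex.polarCoord z, ?_, Complex.polarCoord.left_inv hzsrc⟩
    rw [Complex.polarCoord_apply]
    refine ⟨⟨htar.1, ?_⟩, htar.2⟩
    rwa [mem_ball_zero_iff] at hball

lemma prod_reduce (g : ℝ → ℝ) (s : Set ℝ) :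
    ∫ p in s ×ˢ Ioo (-π) π, g p.1 = (2*π) * ∫ x in s, g x := by
  have h : ∫ p in s ×ˢ Ioo (-π) π, g p.1
      = ∫ p in s ×ˢ Ioo (-π) π, g p.1 * (fun _ : ℝ => (1:ℝ)) p.2 := by
    simp
  rw [h, show (volume : Measure (ℝ × ℝ)) = (volume : Measure ℝ).prod volume from
    Measure.volume_eq_prod ℝ ℝ,
    setIntegral_prod_mul (fun x : ℝ => g x) (fun _ : ℝ => (1:ℝ)) s (Ioo (-π) π)]
  have : ∫ _ in Ioo (-π) π, (1:ℝ) = 2 * π := by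
    rw [setIntegral_const, Real.volume_real_Ioo_of_le (by linarith [Real.pi_pos]), smul_eq_mul, mul_one]
    ring
  rw [this]; ring

lemma polar_integral (f : ℂ → ℝ) {r : ℝ} :
    ∫ ζ in Metric.ball (0:ℂ) r, f ζ
      = ∫ p in Ioo (0:ℝ) r ×ˢ Ioo (-π) π, p.1 * f (Complex.polarCoord.symm p) := by
  have h := Complex.integral_comp_polarCoord_symm ((Metric.ball (0:ℂ) r).indicator f)
  rw [integral_indicator measurableSet_ball] at h
  rw [← h]
  have hmsT : MeasurableSet (Ioo (0:ℝ) r ×ˢ Ioo (-π) π) :=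
    measurableSet_Ioo.prod measurableSet_Ioo
  have h2 : ∫ p in polarCoord.target, p.1 • (Metric.ball (0:ℂ) r).indicator f
        (Complex.polarCoord.symm p)
      = ∫ p in polarCoord.target,
        ((Ioo (0:ℝ) r ×ˢ Ioo (-π) π).indicator
          (fun p : ℝ × ℝ => p.1 * f (Complex.polarCoord.symm p))) p := by
    apply setIntegral_congr_fun polarCoord.open_target.measurableSet
    intro p hp
    rw [polarCoord_target] at hp
    have hp1 : 0 < p.1 := hp.1
    by_cases hlt : p.1 < r
    · have hmem : Complex.polarCoord.symm p ∈ Metric.ball (0:ℂ) r := by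
        rw [mem_ball_zero_iff, Complex.norm_polarCoord_symm,
          abs_of_pos hp1]
        exact hlt
      have hT : p ∈ Ioo (0:ℝ) r ×ˢ Ioo (-π) π := ⟨⟨hp1, hlt⟩, hp.2⟩
      simp only [Set.indicator_of_mem hmem, Set.indicator_of_mem hT, smul_eq_mul]
    · have hmem : Complex.polarCoord.symm p ∉ Metric.ball (0:ℂ) r := by
        rw [mem_ball_zero_iff, Complex.norm_polarCoord_symm,
          abs_of_pos hp1]
        exact hlt
      have hT : p ∉ Ioo (0:ℝ) r ×ˢ Ioo (-π) π := by
        intro hc; exact hlt hc.1.2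
      simp only [Set.indicator_of_notMem hmem, Set.indicator_of_notMem hT, smul_zero]
  rw [h2, setIntegral_indicator hmsT, inter_eq_self_of_subset_right T_subset]

lemma polar_radial (g : ℝ → ℝ) {r : ℝ} (hr : 0 ≤ r) :
    ∫ ζ in Metric.ball (0:ℂ) r, g (‖ζ‖)
      = (2*π) * ∫ x in (0:ℝ)..r, x * g x := by
  rw [polar_integral (fun ζ => g (‖ζ‖))]
  have h2 : ∫ p in Ioo (0:ℝ) r ×ˢ Ioo (-π) π, p.1 * g (‖Complex.polarCoord.symm p‖)
      = ∫ p in Ioo (0:ℝ) r ×ˢ Ioo (-π) π, (fun x : ℝ => x * g x) p.1 := by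
    apply setIntegral_congr_fun (measurableSet_Ioo.prod measurableSet_Ioo)
    intro p hp
    simp only [Complex.norm_polarCoord_symm, abs_of_pos hp.1.1]
  rw [h2, prod_reduce (fun x : ℝ => x * g x) (Ioo 0 r), intervalIntegral.integral_of_le hr, integral_Ioc_eq_integral_Ioo]

lemma polar_integrableOn {f : ℂ → ℝ} {r K : ℝ} (hf : Measurable f)
    (hK : ∀ p : ℝ × ℝ, p ∈ Ioo (0:ℝ) r ×ˢ Ioo (-π) π →
      |p.1 * f (Complex.polarCoord.symm p)| ≤ K) :
    IntegrableOn f (Metric.ball (0:ℂ) r) := by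
  set T : Set (ℝ × ℝ) := Ioo (0:ℝ) r ×ˢ Ioo (-π) π with hT
  have hmsT : MeasurableSet T := measurableSet_Ioo.prod measurableSet_Ioo
  -- integrability on T of the polar integrand
  have hmeas : Measurable (fun p : ℝ × ℝ => p.1 * f (Complex.polarCoord.symm p)) :=
    measurable_fst.mul (hf.comp contPolarSymm.measurable)
  have hTi : IntegrableOn (fun p : ℝ × ℝ => p.1 * f (Complex.polarCoord.symm p)) T := by
    have hconst : IntegrableOn (fun _ : ℝ × ℝ => K) T :=
      integrableOn_const volume_T_lt_top.ne
    refine Integrable.mono' hconst (hmeas.aestronglyMeasurable.restrict) ?_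
    rw [ae_restrict_iff' hmsT]
    exact ae_of_all _ fun p hp => by rw [Real.norm_eq_abs]; exact hK p hp
  -- change of variables on ℝ × ℝ
  set B : ℝ × ℝ → ℝ × ℝ →L[ℝ] ℝ × ℝ := fun p =>
    LinearMap.toContinuousLinearMap (Matrix.toLin (Module.Basis.finTwoProd ℝ) (Module.Basis.finTwoProd ℝ)
      !![Real.cos p.2, -p.1 * Real.sin p.2; Real.sin p.2, p.1 * Real.cos p.2]) with hB
  have B_det : ∀ p, (B p).det = p.1 := by
    intro p
    conv_rhs => rw [← one_mul p.1, ← Real.cos_sq_add_sin_sq p.2]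
    simp only [hB, neg_mul, LinearMap.det_toContinuousLinearMap, LinearMap.det_toLin,
      Matrix.det_fin_two_of, sub_neg_eq_add]
    ring
  have hinj : Set.InjOn polarCoord.symm T := by
    have h1 : Set.InjOn polarCoord.symm polarCoord.symm.source := polarCoord.symm.injOn
    rw [OpenPartialHomeomorph.symm_source] at h1
    exact h1.mono T_subset
  have hder : ∀ p ∈ T, HasFDerivWithinAt polarCoord.symm (B p) T p := fun p _ =>
    (hasFDerivAt_polarCoord_symm p).hasFDerivWithinAt
  have key := integrableOn_image_iff_integrableOn_abs_det_fderiv_smul volume hmsT hder hinj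
    (f ∘ (Complex.measurableEquivRealProd.symm))
  have hcomp : ∀ p : ℝ × ℝ,
      (f ∘ Complex.measurableEquivRealProd.symm) (polarCoord.symm p)
        = f (Complex.polarCoord.symm p) := fun p => rfl
  have key2 : IntegrableOn (f ∘ Complex.measurableEquivRealProd.symm)
      (polarCoord.symm '' T) := by
    rw [key]
    apply hTi.congr_fun _ hmsT
    intro p hp
    show p.1 * f (Complex.polarCoord.symm p)
      = |(B p).det| • (f ∘ Complex.measurableEquivRealProd.symm) (polarCoord.symm p)
    rw [B_det p, abs_of_pos hp.1.1, hcomp p, smul_eq_mul]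
  -- transfer to ℂ
  have key3 : IntegrableOn f
      (Complex.measurableEquivRealProd.symm '' (polarCoord.symm '' T)) := by
    rw [(Complex.volume_preserving_equiv_real_prod.symm _).integrableOn_image
      (MeasurableEquiv.measurableEmbedding _)]
    exact key2
  have himg : Complex.measurableEquivRealProd.symm '' (polarCoord.symm '' T)
      = Metric.ball (0:ℂ) r ∩ Complex.slitPlane := by
    rw [← Set.image_comp]
    rw [← image_polar (r := r)]
    rfl
  rw [himg] at key3
  -- remove the slit
  have hae : (Metric.ball (0:ℂ) r ∩ Complex.slitPlane : Set ℂ) =ᵐ[volume] Metric.ball (0:ℂ) r := by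
    rw [MeasureTheory.ae_eq_set]
    constructor
    · have hempty : (Metric.ball (0:ℂ) r ∩ Complex.slitPlane) \ Metric.ball (0:ℂ) r = ∅ := by
        ext z; simp only [Set.mem_diff, Set.mem_inter_iff, Set.mem_empty_iff_false, iff_false,
          not_and, and_imp]
        intro h _ ; exact fun hc => (hc h).elim
      rw [hempty]; exact measure_empty
    · refine measure_mono_null ?_ volume_line
      intro z hz
      have h1 : z ∉ Complex.slitPlane := fun hc => hz.2 ⟨hz.1, hc⟩
      simp only [Complex.mem_slitPlane_iff, not_or, not_lt, Decidable.not_not] at h1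
      exact h1.2
  unfold IntegrableOn
  rw [← Measure.restrict_congr_set hae]
  exact key3

lemma int_dens {r : ℝ} (hr0 : 0 ≤ r) (hr1 : r < 1) :
    ∫ s in (0:ℝ)..r, s * (4/(1-s^2)^2) = 2/(1-r^2) - 2 := by
  have hne : ∀ x ∈ Set.uIcc (0:ℝ) r, 1 - x^2 ≠ 0 := by
    intro x hx
    rw [Set.uIcc_of_le hr0] at hx
    have h1 : x^2 < 1 := by nlinarith [hx.1, hx.2]
    nlinarith
  have hderiv : ∀ x ∈ Set.uIcc (0:ℝ) r,
      HasDerivAt (fun y : ℝ => 2/(1-y^2)) (x * (4/(1-x^2)^2)) x := by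
    intro x hx
    have h2 : HasDerivAt (fun y : ℝ => 1 - y^2) (-(2*x)) x := by
      simpa using (hasDerivAt_pow 2 x).const_sub 1
    have h3 : HasDerivAt (fun y : ℝ => 2/(1-y^2)) _ x := (hasDerivAt_const x (2:ℝ)).div h2 (hne x hx)
    convert h3 using 1
    field_simp
    ring
  have hint : IntervalIntegrable (fun x : ℝ => x * (4/(1-x^2)^2)) volume 0 r := by
    apply ContinuousOn.intervalIntegrable
    apply ContinuousOn.mul continuousOn_id
    apply ContinuousOn.div continuousOn_const
    · fun_prop
    · intro x hx
      exact pow_ne_zero 2 (hne x hx)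
  rw [intervalIntegral.integral_eq_sub_of_hasDerivAt hderiv hint]
  norm_num

lemma int_h {r : ℝ} (hr0 : 0 ≤ r) (hr1 : r < 1) :
    ∫ s in (0:ℝ)..r, s * ((r-s)/(1-s)^2)
      = -(2-r) * Real.log (1-r) - 2*r := by
  have hne : ∀ x ∈ Set.uIcc (0:ℝ) r, 1 - x ≠ 0 := by
    intro x hx
    rw [Set.uIcc_of_le hr0] at hx
    have := hx.2
    intro hc; nlinarith
  have hderiv : ∀ x ∈ Set.uIcc (0:ℝ) r,
      HasDerivAt (fun y : ℝ => -(2-r) * Real.log (1-y) - (1-r)/(1-y) - y)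
        (x * ((r-x)/(1-x)^2)) x := by
    intro x hx
    have hlin : HasDerivAt (fun y : ℝ => 1 - y) (-1) x := (hasDerivAt_id x).const_sub 1
    have h1 : HasDerivAt (fun y : ℝ => Real.log (1-y)) ((1-x)⁻¹ * (-1)) x :=
      (Real.hasDerivAt_log (hne x hx)).comp x hlin
    have h2 : HasDerivAt (fun y : ℝ => (1-r)/(1-y)) _ x := (hasDerivAt_const x (1-r)).div hlin (hne x hx)
    have h3 : HasDerivAt (fun y : ℝ => -(2-r) * Real.log (1-y) - (1-r)/(1-y) - y) _ x :=
      ((h1.const_mul (-(2-r))).sub h2).sub (hasDerivAt_id x)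
    have hnex : (1:ℝ) - x ≠ 0 := hne x hx
    convert h3 using 1
    field_simp
    ring
  have hint : IntervalIntegrable (fun x : ℝ => x * ((r-x)/(1-x)^2)) volume 0 r := by
    apply ContinuousOn.intervalIntegrable
    apply ContinuousOn.mul continuousOn_id
    apply ContinuousOn.div (by fun_prop)
    · fun_prop
    · intro x hx
      exact pow_ne_zero 2 (hne x hx)
  rw [intervalIntegral.integral_eq_sub_of_hasDerivAt hderiv hint]
  have h10 : Real.log (1 - 0) = 0 := by norm_num
  have hr1' : (1:ℝ) - r ≠ 0 := by intro hc; nlinarith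
  field_simp
  simp only [sub_zero, mul_one, Real.log_one, mul_zero]
  ring

lemma smax_le {r s : ℝ} (hr0 : 0 < r) (hr1 : r ≤ 1) (hs0 : 0 < s) :
    s * max (Real.log (r / s)) 0 ≤ 1 := by
  rcases le_or_gt r s with h | h
  · rw [max_eq_right (Real.log_nonpos (by positivity) ((div_le_one hs0).2 h))]
    norm_num
  · have h1 : Real.log (r/s) ≤ -Real.log s := by
      rw [← Real.log_inv]
      apply Real.log_le_log (by positivity)
      rw [div_le_iff₀ hs0, inv_mul_cancel₀ hs0.ne']
      exact hr1
    have h2 : -Real.log s ≤ s⁻¹ := by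
      have := Real.one_sub_inv_le_log_of_pos hs0
      nlinarith [inv_pos.2 hs0]
    have h3 : max (Real.log (r/s)) 0 ≤ s⁻¹ := max_le (h1.trans h2) (by positivity)
    calc s * max (Real.log (r/s)) 0 ≤ s * s⁻¹ := mul_le_mul_of_nonneg_left h3 hs0.le
      _ = 1 := mul_inv_cancel₀ hs0.ne'

lemma sabs_le {r s : ℝ} (hr2 : 1/2 ≤ r) (hr1 : r ≤ 1) (hs0 : 0 < s) (hs1 : s ≤ 1) :
    s * |Real.log (r / s)| ≤ Real.log 2 + 1 := by
  have hr0 : (0:ℝ) < r := by linarith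
  rw [Real.log_div hr0.ne' hs0.ne']
  have h1 : |Real.log r| ≤ Real.log 2 := by
    rw [abs_le]
    constructor
    · have : Real.log (1/2) ≤ Real.log r := Real.log_le_log (by norm_num) hr2
      rw [one_div, Real.log_inv] at this
      linarith
    · exact (Real.log_nonpos hr0.le hr1).trans (Real.log_nonneg (by norm_num))
  have h2 : |Real.log s| = -Real.log s := abs_of_nonpos (Real.log_nonpos hs0.le hs1)
  have h3 : s * (-Real.log s) ≤ 1 := by
    have := Real.one_sub_inv_le_log_of_pos hs0
    have h4 : -Real.log s ≤ s⁻¹ := by nlinarith [inv_pos.2 hs0]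
    calc s * (-Real.log s) ≤ s * s⁻¹ := by
          apply mul_le_mul_of_nonneg_left h4 hs0.le
      _ = 1 := mul_inv_cancel₀ hs0.ne'
  have h5 : |Real.log r - Real.log s| ≤ |Real.log r| + |Real.log s| := abs_sub _ _
  have h6 : 0 ≤ Real.log 2 := Real.log_nonneg (by norm_num)
  have h7 : s * |Real.log r - Real.log s| ≤ s * (Real.log 2 + (-Real.log s)) := by
    apply mul_le_mul_of_nonneg_left _ hs0.le
    rw [h2] at h5
    linarith
  have h8 : s * (Real.log 2 + (-Real.log s)) ≤ Real.log 2 + 1 := by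
    have := mul_le_mul_of_nonneg_right hs1 h6
    nlinarith
  linarith

set_option maxHeartbeats 2000000 in
/-- for `r ∈ [1/2,1)`, `R = log((1+r)/(1−r))`,
`M_R = ∫_𝔻 log⁺(r/|ζ|)·4/(1−|ζ|²)² dA`, and any measurable `u : 𝔻 → [0,1]`, the averages
of `u` with weights `log(r/|ζ|)` and `log(1/|ζ|)` over `{|ζ|<r}` differ by at most `C/R`
for a universal constant `C`. -/
theorem comparison_B_R_and_D_R : ∃ C > 0, ∀ r : ℝ, 1/2 ≤ r → r < 1 →
    ∀ R M : ℝ, R = Real.log ((1 + r) / (1 - r)) →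
    M = (∫ ζ in Metric.ball (0 : ℂ) 1,
      max (Real.log (r / ‖ζ‖)) 0 * (4 / (1 - ‖ζ‖ ^ 2) ^ 2)) →
    ∀ u : ℂ → ℝ, Measurable u → (∀ ζ, u ζ ∈ Set.Icc (0:ℝ) 1) →
    |(1 / M) * (∫ ζ in Metric.ball (0 : ℂ) r,
        Real.log (r / ‖ζ‖) * u ζ * (4 / (1 - ‖ζ‖ ^ 2) ^ 2))
      - (1 / M) * (∫ ζ in Metric.ball (0 : ℂ) r,
        Real.log (1 / ‖ζ‖) * u ζ * (4 / (1 - ‖ζ‖ ^ 2) ^ 2))|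
      ≤ C / R := by
  refine ⟨80 * π, by positivity, ?_⟩
  intro r hr2 hr1 R M hR hM u hu humem
  have hr0 : (0:ℝ) < r := by linarith
  have hab : Measurable (fun ζ : ℂ => ‖ζ‖) := continuous_norm.measurable
  have hrsq : (0:ℝ) < 1 - r^2 := by nlinarith
  set K0 : ℝ := 4 / (1 - r^2)^2 with hK0def
  have hK0pos : 0 < K0 := by positivity
  -- ae nonzero
  have h0 : ∀ᵐ (ζ : ℂ) ∂volume, ζ ≠ 0 := by
    rw [ae_iff]
    refine measure_mono_null ?_ volume_line
    intro z hz
    simp only [Set.mem_setOf_eq, Decidable.not_not] at hz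
    simp [hz]
  -- densities
  have hdens_le : ∀ s : ℝ, 0 ≤ s → s ≤ r → 4 / (1 - s^2)^2 ≤ K0 := by
    intro s hs0 hsr
    apply div_le_div_of_nonneg_left (by norm_num) (by positivity)
    have h1 : 1 - r^2 ≤ 1 - s^2 := by nlinarith
    nlinarith
  -- positivity of R
  have hRpos : 0 < R := by
    rw [hR]
    apply Real.log_pos
    rw [lt_div_iff₀ (by linarith)]
    linarith
  -- R upper bound via L
  set L : ℝ := -Real.log (1-r) with hLdef
  have hL0 : 0 ≤ L := by
    have := Real.log_nonpos (by linarith) (by linarith : (1:ℝ) - r ≤ 1)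
    simp only [hLdef]; linarith
  have hRL : R ≤ Real.log 2 + L := by
    rw [hR, Real.log_div (by linarith) (by linarith)]
    have : Real.log (1+r) ≤ Real.log 2 := Real.log_le_log (by linarith) (by linarith)
    simp only [hLdef]; linarith
  -- measurability of integrands
  have hFmeas : Measurable (fun ζ : ℂ =>
      max (Real.log (r / ‖ζ‖)) 0 * (4 / (1 - ‖ζ‖ ^ 2) ^ 2)) := by
    apply Measurable.mul
    · exact (Real.measurable_log.comp (measurable_const.div hab)).max measurable_const
    · exact measurable_const.div (((measurable_const.sub (hab.pow_const 2)).pow_const 2))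
  have hf1meas : Measurable (fun ζ : ℂ =>
      Real.log (r / ‖ζ‖) * u ζ * (4 / (1 - ‖ζ‖ ^ 2) ^ 2)) := by
    apply Measurable.mul
    · exact (Real.measurable_log.comp (measurable_const.div hab)).mul hu
    · exact measurable_const.div (((measurable_const.sub (hab.pow_const 2)).pow_const 2))
  have hf2meas : Measurable (fun ζ : ℂ =>
      Real.log (1 / ‖ζ‖) * u ζ * (4 / (1 - ‖ζ‖ ^ 2) ^ 2)) := by
    apply Measurable.mul
    · exact (Real.measurable_log.comp (measurable_const.div hab)).mul hu
    · exact measurable_const.div (((measurable_const.sub (hab.pow_const 2)).pow_const 2))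
  -- INTEGRABILITY
  have hFi : IntegrableOn (fun ζ : ℂ =>
      max (Real.log (r / ‖ζ‖)) 0 * (4 / (1 - ‖ζ‖ ^ 2) ^ 2))
      (Metric.ball (0:ℂ) 1) := by
    apply polar_integrableOn (K := K0) hFmeas
    intro p hp
    obtain ⟨⟨hp0, hp1⟩, -⟩ := hp
    rw [Complex.norm_polarCoord_symm, abs_of_pos hp0]
    rcases le_or_gt r p.1 with h | h
    · rw [max_eq_right (Real.log_nonpos (by positivity) ((div_le_one hp0).2 h))]
      simpa using hK0pos.le
    · have h1 : p.1 * max (Real.log (r / p.1)) 0 ≤ 1 := smax_le hr0 hr1.le hp0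
      have h2 : 4 / (1 - p.1^2)^2 ≤ K0 := hdens_le p.1 hp0.le h.le
      have h3 : (0:ℝ) ≤ 4 / (1 - p.1^2)^2 := by positivity
      have h4 : 0 ≤ p.1 * max (Real.log (r / p.1)) 0 :=
        mul_nonneg hp0.le (le_max_right _ _)
      rw [abs_of_nonneg (by nlinarith :
        (0:ℝ) ≤ p.1 * (max (Real.log (r / p.1)) 0 * (4 / (1 - p.1 ^ 2) ^ 2)))]
      calc p.1 * (max (Real.log (r / p.1)) 0 * (4 / (1 - p.1 ^ 2) ^ 2))
          = (p.1 * max (Real.log (r / p.1)) 0) * (4 / (1 - p.1 ^ 2) ^ 2) := by ring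
        _ ≤ 1 * K0 := mul_le_mul h1 h2 h3 zero_le_one
        _ = K0 := one_mul _
  have huabs : ∀ z : ℂ, |u z| ≤ 1 := fun z =>
    abs_le.2 ⟨by linarith [(humem z).1], (humem z).2⟩
  have hf1i : IntegrableOn (fun ζ : ℂ =>
      Real.log (r / ‖ζ‖) * u ζ * (4 / (1 - ‖ζ‖ ^ 2) ^ 2))
      (Metric.ball (0:ℂ) r) := by
    apply polar_integrableOn (K := (Real.log 2 + 1) * K0) hf1meas
    intro p hp
    obtain ⟨⟨hp0, hp1⟩, -⟩ := hp
    rw [Complex.norm_polarCoord_symm, abs_of_pos hp0]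
    have hD0 : (0:ℝ) ≤ 4 / (1 - p.1 ^ 2) ^ 2 := by positivity
    rw [abs_mul, abs_mul, abs_mul, abs_of_pos hp0, abs_of_nonneg hD0]
    have h1 : p.1 * |Real.log (r / p.1)| ≤ Real.log 2 + 1 :=
      sabs_le hr2 hr1.le hp0 (by linarith)
    have h2 : |u (Complex.polarCoord.symm p)| ≤ 1 := huabs _
    have h3 : 4 / (1 - p.1^2)^2 ≤ K0 := hdens_le p.1 hp0.le hp1.le
    have hlog2 : (0:ℝ) ≤ Real.log 2 + 1 := by
      have := Real.log_nonneg (by norm_num : (1:ℝ) ≤ 2); linarith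
    calc p.1 * (|Real.log (r / p.1)| * |u (Complex.polarCoord.symm p)| *
          (4 / (1 - p.1 ^ 2) ^ 2))
        = ((p.1 * |Real.log (r / p.1)|) * |u (Complex.polarCoord.symm p)|) *
          (4 / (1 - p.1 ^ 2) ^ 2) := by ring
      _ ≤ ((Real.log 2 + 1) * 1) * K0 := by
          apply mul_le_mul _ h3 hD0 (by positivity)
          exact mul_le_mul h1 h2 (abs_nonneg _) hlog2
      _ = (Real.log 2 + 1) * K0 := by ring
  have hf2i : IntegrableOn (fun ζ : ℂ =>
      Real.log (1 / ‖ζ‖) * u ζ * (4 / (1 - ‖ζ‖ ^ 2) ^ 2))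
      (Metric.ball (0:ℂ) r) := by
    apply polar_integrableOn (K := (Real.log 2 + 1) * K0) hf2meas
    intro p hp
    obtain ⟨⟨hp0, hp1⟩, -⟩ := hp
    rw [Complex.norm_polarCoord_symm, abs_of_pos hp0]
    have hD0 : (0:ℝ) ≤ 4 / (1 - p.1 ^ 2) ^ 2 := by positivity
    rw [abs_mul, abs_mul, abs_mul, abs_of_pos hp0, abs_of_nonneg hD0]
    have h1 : p.1 * |Real.log (1 / p.1)| ≤ Real.log 2 + 1 :=
      sabs_le (by norm_num) le_rfl hp0 (by linarith)
    have h2 : |u (Complex.polarCoord.symm p)| ≤ 1 := huabs _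
    have h3 : 4 / (1 - p.1^2)^2 ≤ K0 := hdens_le p.1 hp0.le hp1.le
    have hlog2 : (0:ℝ) ≤ Real.log 2 + 1 := by
      have := Real.log_nonneg (by norm_num : (1:ℝ) ≤ 2); linarith
    calc p.1 * (|Real.log (1 / p.1)| * |u (Complex.polarCoord.symm p)| *
          (4 / (1 - p.1 ^ 2) ^ 2))
        = ((p.1 * |Real.log (1 / p.1)|) * |u (Complex.polarCoord.symm p)|) *
          (4 / (1 - p.1 ^ 2) ^ 2) := by ring
      _ ≤ ((Real.log 2 + 1) * 1) * K0 := by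
          apply mul_le_mul _ h3 hD0 (by positivity)
          exact mul_le_mul h1 h2 (abs_nonneg _) hlog2
      _ = (Real.log 2 + 1) * K0 := by ring
  have hdi : IntegrableOn (fun ζ : ℂ => 4 / (1 - ‖ζ‖ ^ 2) ^ 2)
      (Metric.ball (0:ℂ) r) := by
    apply polar_integrableOn (f := fun ζ : ℂ => 4 / (1 - ‖ζ‖ ^ 2) ^ 2) (K := K0)
      (measurable_const.div (((measurable_const.sub (hab.pow_const 2)).pow_const 2)))
    intro p hp
    obtain ⟨⟨hp0, hp1⟩, -⟩ := hp
    rw [Complex.norm_polarCoord_symm, abs_of_pos hp0]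
    have hD0 : (0:ℝ) ≤ 4 / (1 - p.1 ^ 2) ^ 2 := by positivity
    rw [abs_of_nonneg (mul_nonneg hp0.le hD0)]
    have h3 : 4 / (1 - p.1^2)^2 ≤ K0 := hdens_le p.1 hp0.le hp1.le
    nlinarith [hp0.le, hp1.le, hK0pos.le]
  have hhi : IntegrableOn (fun ζ : ℂ =>
      (r - ‖ζ‖) / (1 - ‖ζ‖) ^ 2) (Metric.ball (0:ℂ) r) := by
    apply polar_integrableOn (f := fun ζ : ℂ => (r - ‖ζ‖) / (1 - ‖ζ‖) ^ 2) (K := 1/(1-r)^2)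
      ((measurable_const.sub hab).div ((measurable_const.sub hab).pow_const 2))
    intro p hp
    obtain ⟨⟨hp0, hp1⟩, -⟩ := hp
    rw [Complex.norm_polarCoord_symm, abs_of_pos hp0]
    have hd0 : (0:ℝ) < (1 - p.1)^2 := by nlinarith
    rw [abs_of_nonneg (mul_nonneg hp0.le (div_nonneg (by linarith) hd0.le))]
    have hnum : p.1 * (r - p.1) ≤ 1 := by nlinarith
    have hden : (1-r)^2 ≤ (1-p.1)^2 := by nlinarith
    calc p.1 * ((r - p.1) / (1 - p.1) ^ 2) = (p.1 * (r - p.1)) / (1 - p.1)^2 := by ring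
      _ ≤ 1 / (1-r)^2 := div_le_div₀ zero_le_one hnum (by nlinarith) hden
  -- F nonneg
  have hF0 : ∀ ζ : ℂ, 0 ≤ max (Real.log (r / ‖ζ‖)) 0 * (4 / (1 - ‖ζ‖ ^ 2) ^ 2) :=
    fun ζ => mul_nonneg (le_max_right _ _) (by positivity)
  -- lower bound 1 : M ≥ π log 2 / 4
  have lower1 : π * Real.log 2 / 4 ≤ M := by
    have step1 : ∫ _ in Metric.ball (0:ℂ) (1/4), (4 * Real.log 2)
        ≤ ∫ ζ in Metric.ball (0:ℂ) (1/4),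
          max (Real.log (r / ‖ζ‖)) 0 * (4 / (1 - ‖ζ‖ ^ 2) ^ 2) := by
      apply setIntegral_mono_on_ae
        (integrableOn_const measure_ball_lt_top.ne)
        (hFi.mono_set (Metric.ball_subset_ball (by norm_num)))
        measurableSet_ball
      filter_upwards [h0] with ζ hζ hmem
      have hs0 : 0 < ‖ζ‖ := norm_pos_iff.2 hζ
      have hs1 : ‖ζ‖ < 1/4 := by
        rwa [Metric.mem_ball, dist_zero_right] at hmem
      have h1 : Real.log 2 ≤ Real.log (r / ‖ζ‖) := by
        apply Real.log_le_log (by norm_num)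
        rw [le_div_iff₀ hs0]
        nlinarith
      have h2 : Real.log 2 ≤ max (Real.log (r / ‖ζ‖)) 0 :=
        h1.trans (le_max_left _ _)
      have h3 : (4:ℝ) ≤ 4 / (1 - ‖ζ‖ ^ 2) ^ 2 := by
        have hx : ‖ζ‖ ^ 2 < 1 := by nlinarith
        rw [le_div_iff₀ (pow_pos (by linarith) 2)]
        nlinarith
      have hl2 : (0:ℝ) ≤ Real.log 2 := Real.log_nonneg (by norm_num)
      calc 4 * Real.log 2 = Real.log 2 * 4 := by ring
        _ ≤ max (Real.log (r / ‖ζ‖)) 0 * (4 / (1 - ‖ζ‖ ^ 2) ^ 2) :=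
            mul_le_mul h2 h3 (by norm_num) (hl2.trans h2)
    have step2 : ∫ ζ in Metric.ball (0:ℂ) (1/4),
          max (Real.log (r / ‖ζ‖)) 0 * (4 / (1 - ‖ζ‖ ^ 2) ^ 2)
        ≤ M := by
      rw [hM]
      apply setIntegral_mono_set hFi (ae_of_all _ hF0)
        ((Metric.ball_subset_ball (by norm_num)).eventuallyLE)
    have step3 : ∫ _ in Metric.ball (0:ℂ) (1/4), (4 * Real.log 2) = π * Real.log 2 / 4 := by
      rw [setIntegral_const, measureReal_def, Complex.volume_ball, ENNReal.toReal_mul, ENNReal.toReal_pow,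
        ENNReal.toReal_ofReal (by norm_num : (0:ℝ) ≤ 1/4), ENNReal.coe_toReal,
        NNReal.coe_real_pi, smul_eq_mul]
      ring
    linarith
  -- lower bound 2 : M ≥ 2π(L-2)
  have lower2 : 2*π*(L - 2) ≤ M := by
    have step1 : ∫ ζ in Metric.ball (0:ℂ) r,
          (r - ‖ζ‖) / (1 - ‖ζ‖) ^ 2
        ≤ ∫ ζ in Metric.ball (0:ℂ) r,
          max (Real.log (r / ‖ζ‖)) 0 * (4 / (1 - ‖ζ‖ ^ 2) ^ 2) := by
      apply setIntegral_mono_on_ae hhi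
        (hFi.mono_set (Metric.ball_subset_ball hr1.le)) measurableSet_ball
      filter_upwards [h0] with ζ hζ hmem
      have hs0 : 0 < ‖ζ‖ := norm_pos_iff.2 hζ
      have hsr : ‖ζ‖ < r := by
        rwa [Metric.mem_ball, dist_zero_right] at hmem
      set s : ℝ := ‖ζ‖
      have hrs : 0 < r / s := by positivity
      have h1 : 1 - (r/s)⁻¹ ≤ Real.log (r / s) := Real.one_sub_inv_le_log_of_pos hrs
      have h1' : 1 - s/r ≤ Real.log (r/s) := by rwa [inv_div] at h1
      have h2 : r - s ≤ 1 - s/r := by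
        have hs_eq : s / r * r = s := div_mul_cancel₀ s hr0.ne'
        have hd1 : s/r ≤ 1 := by rw [div_le_one hr0]; linarith
        nlinarith [mul_nonneg (by linarith : (0:ℝ) ≤ 1 - r) (by linarith : (0:ℝ) ≤ 1 - s/r)]
      have h3 : r - s ≤ max (Real.log (r/s)) 0 :=
        le_trans (h2.trans h1') (le_max_left _ _)
      have hds : (0:ℝ) < (1 - s)^2 := by nlinarith
      have hds2 : (0:ℝ) < (1 - s^2)^2 := by nlinarith
      have h4 : 1 / (1-s)^2 ≤ 4 / (1 - s^2)^2 := by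
        rw [div_le_div_iff₀ hds hds2]
        have e : (1 - s^2)^2 = (1-s)^2 * (1+s)^2 := by ring
        have h5 : (1+s)^2 ≤ 4 := by nlinarith
        nlinarith [mul_le_mul_of_nonneg_left h5 hds.le]
      calc (r - s)/(1-s)^2 = (r-s) * (1/(1-s)^2) := by ring
        _ ≤ max (Real.log (r/s)) 0 * (4 / (1 - s^2)^2) :=
            mul_le_mul h3 h4 (by positivity) ((by linarith : (0:ℝ) ≤ r - s).trans h3)
    have step2 : ∫ ζ in Metric.ball (0:ℂ) r,
          max (Real.log (r / ‖ζ‖)) 0 * (4 / (1 - ‖ζ‖ ^ 2) ^ 2)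
        ≤ M := by
      rw [hM]
      exact setIntegral_mono_set hFi (ae_of_all _ hF0)
        ((Metric.ball_subset_ball hr1.le).eventuallyLE)
    have step3 : ∫ ζ in Metric.ball (0:ℂ) r,
          (r - ‖ζ‖) / (1 - ‖ζ‖) ^ 2
        = 2*π * (-(2-r) * Real.log (1-r) - 2*r) := by
      have hval : ∫ ζ in Metric.ball (0:ℂ) r,
            (r - ‖ζ‖) / (1 - ‖ζ‖) ^ 2
          = 2*π * ∫ x in (0:ℝ)..r, x * ((r - x)/(1-x)^2) :=
        polar_radial (fun x => (r - x)/(1-x)^2) hr0.le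
      rw [hval, int_h hr0.le hr1]
    have hfin : 2*π*(L - 2) ≤ 2*π * (-(2-r) * Real.log (1-r) - 2*r) := by
      have hkey : L - 2 ≤ -(2-r) * Real.log (1-r) - 2*r := by
        have e1 : -(2-r) * Real.log (1-r) = (2-r) * L := by simp only [hLdef]; ring
        rw [e1]
        nlinarith [mul_nonneg (by linarith : (0:ℝ) ≤ 1 - r) hL0]
      nlinarith [Real.pi_pos]
    linarith
  -- M is positive, and M ≥ R/10
  have hlog2pos : (0:ℝ) < Real.log 2 := Real.log_pos (by norm_num)
  have hMpos : 0 < M := lt_of_lt_of_le (by positivity) lower1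
  have hMR : R / 10 ≤ M := by
    rcases le_or_gt R (27/5) with hc | hc
    · have : R / 10 ≤ 27/50 := by linarith
      have h314 : (3.14:ℝ) < π := Real.pi_gt_d2
      have hlog2 : (0.6931471803:ℝ) < Real.log 2 := Real.log_two_gt_d9
      nlinarith
    · have hLR : R - Real.log 2 ≤ L := by linarith
      have h314 : (3.14:ℝ) < π := Real.pi_gt_d2
      have hlog2' : Real.log 2 < 0.6931471808 := Real.log_two_lt_d9
      have hstep : 2*π*((R - Real.log 2) - 2) ≤ 2*π*(L-2) := by
        nlinarith [Real.pi_pos]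
      nlinarith [Real.pi_pos]
  -- the difference of the two integrals
  have hdiff : (∫ ζ in Metric.ball (0 : ℂ) r,
        Real.log (r / ‖ζ‖) * u ζ * (4 / (1 - ‖ζ‖ ^ 2) ^ 2))
      - (∫ ζ in Metric.ball (0 : ℂ) r,
        Real.log (1 / ‖ζ‖) * u ζ * (4 / (1 - ‖ζ‖ ^ 2) ^ 2))
      = ∫ ζ in Metric.ball (0 : ℂ) r,
        Real.log r * u ζ * (4 / (1 - ‖ζ‖ ^ 2) ^ 2) := by
    rw [← integral_sub hf1i hf2i]
    apply integral_congr_ae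
    filter_upwards [ae_restrict_of_ae h0] with ζ hζ
    have hs0 : 0 < ‖ζ‖ := norm_pos_iff.2 hζ
    have e1 : Real.log (r / ‖ζ‖) = Real.log r - Real.log (‖ζ‖) :=
      Real.log_div hr0.ne' hs0.ne'
    have e2 : Real.log (1 / ‖ζ‖) = -Real.log (‖ζ‖) := by
      rw [one_div, Real.log_inv]
    rw [e1, e2]
    ring
  -- bound on the difference integral
  have hdbound : |∫ ζ in Metric.ball (0 : ℂ) r,
        Real.log r * u ζ * (4 / (1 - ‖ζ‖ ^ 2) ^ 2)| ≤ 8 * π := by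
    have hlogr : 0 ≤ -Real.log r := by
      have := Real.log_nonpos hr0.le hr1.le
      linarith
    have h1 : |∫ ζ in Metric.ball (0 : ℂ) r,
          Real.log r * u ζ * (4 / (1 - ‖ζ‖ ^ 2) ^ 2)|
        ≤ ∫ ζ in Metric.ball (0 : ℂ) r,
          (-Real.log r) * (4 / (1 - ‖ζ‖ ^ 2) ^ 2) := by
      rw [← Real.norm_eq_abs]
      apply norm_integral_le_of_norm_le (hdi.const_mul (-Real.log r))
      apply ae_of_all
      intro ζ
      have hd0 : (0:ℝ) ≤ 4 / (1 - ‖ζ‖ ^ 2) ^ 2 := by positivity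
      rw [Real.norm_eq_abs, abs_mul, abs_mul, abs_of_nonneg hd0,
        abs_of_nonpos (Real.log_nonpos hr0.le hr1.le), abs_of_nonneg (humem ζ).1]
      nlinarith [mul_nonneg (mul_nonneg hlogr hd0) (sub_nonneg.2 (humem ζ).2),
        (humem ζ).1, (humem ζ).2]
    have h2 : ∫ ζ in Metric.ball (0 : ℂ) r,
          (-Real.log r) * (4 / (1 - ‖ζ‖ ^ 2) ^ 2)
        = (-Real.log r) * (2*π * (2/(1-r^2) - 2)) := by
      rw [integral_const_mul]
      congr 1
      have hval : ∫ ζ in Metric.ball (0:ℂ) r, 4 / (1 - ‖ζ‖ ^ 2) ^ 2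
          = 2*π * ∫ x in (0:ℝ)..r, x * (4/(1-x^2)^2) :=
        polar_radial (fun x => 4/(1-x^2)^2) hr0.le
      rw [hval, int_dens hr0.le hr1]
    have h3 : (-Real.log r) * (2*π * (2/(1-r^2) - 2)) ≤ 8 * π := by
      have hlr : -Real.log r ≤ 2*(1-r) := by
        have h := Real.one_sub_inv_le_log_of_pos hr0
        have hinv : r⁻¹ ≤ 2 := by
          rw [inv_le_comm₀ hr0 (by norm_num)]
          linarith
        nlinarith [mul_le_mul_of_nonneg_right hinv (by linarith : (0:ℝ) ≤ 1-r),
          inv_mul_cancel₀ hr0.ne']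
      have hd2 : (2:ℝ) ≤ 2/(1-r^2) := by
        rw [le_div_iff₀ hrsq]; nlinarith
      have hd3 : 2/(1-r^2) - 2 ≤ 2/(1-r^2) := by linarith
      have hprod : (2*(1-r)) * (2/(1-r^2)) = 4/(1+r) := by
        field_simp
        ring
      have h4 : 4/(1+r) ≤ 4 := by
        rw [div_le_iff₀ (by linarith : (0:ℝ) < 1 + r)]
        nlinarith
      have h5 : (-Real.log r) * (2/(1-r^2) - 2) ≤ 4 := by
        calc (-Real.log r) * (2/(1-r^2) - 2) ≤ (2*(1-r)) * (2/(1-r^2)) := by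
              apply mul_le_mul hlr hd3 (by linarith) (by linarith)
          _ = 4/(1+r) := hprod
          _ ≤ 4 := h4
      nlinarith [Real.pi_pos]
    linarith
  -- final assembly
  rw [← mul_sub, abs_mul, abs_of_pos (by positivity : (0:ℝ) < 1/M), hdiff]
  have h1M : 1/M ≤ 10/R := by
    have h := one_div_le_one_div_of_le (by positivity : (0:ℝ) < R/10) hMR
    rwa [one_div_div] at h
  calc (1/M) * |∫ ζ in Metric.ball (0 : ℂ) r,
        Real.log r * u ζ * (4 / (1 - ‖ζ‖ ^ 2) ^ 2)|
      ≤ (10/R) * (8*π) :=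
        mul_le_mul h1M hdbound (abs_nonneg _) (by positivity)
    _ = 80 * π / R := by ring
end

section
/- There is a constant C > 0 such that for every R ≥ 3, setting R′ := R − √(2R·log R), and for every ρ with 0 ≤ ρ ≤ R′, one has ∫_R^∞ t^{−1/2}·exp(−(√t/2 − ρ/(2√t))²) dt ≤ C·(log R)^{−1/2}·exp(−(R−R′)²/(4R)) = C·R^{−1/2}·(log R)^{−1/2}. -/
open MeasureTheory Real

/-- Gaussian tail estimate in Lemma 7.5: there is `C > 0` such that for every
`R ≥ 3`, with `R′ = R − √(2R log R)`, and every `0 ≤ ρ ≤ R′`,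
`∫_R^∞ t^{−1/2}·exp(−(√t/2 − ρ/(2√t))²) dt ≤ C·(log R)^{−1/2}·exp(−(R−R′)²/(4R))`, and the
right-hand side equals `C·R^{−1/2}·(log R)^{−1/2}`. -/
theorem gaussian_tail_estimate : ∃ C > 0, ∀ R : ℝ, 3 ≤ R →
    ∀ R' : ℝ, R' = R - Real.sqrt (2 * R * Real.log R) →
    ∀ ρ : ℝ, 0 ≤ ρ → ρ ≤ R' →
    (∫ t in Set.Ioi R,
        (1 / Real.sqrt t) * Real.exp (-(Real.sqrt t / 2 - ρ / (2 * Real.sqrt t)) ^ 2))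
      ≤ C / Real.sqrt (Real.log R) * Real.exp (-(R - R') ^ 2 / (4 * R)) ∧
    C / Real.sqrt (Real.log R) * Real.exp (-(R - R') ^ 2 / (4 * R))
      = C / Real.sqrt R / Real.sqrt (Real.log R) := by
  refine ⟨3, by norm_num, ?_⟩
  intro R hR R' hR' ρ hρ0 hρR'
  have hR0 : (0:ℝ) < R := by linarith
  have hlogR : 0 < Real.log R := Real.log_pos (by linarith)
  set a : ℝ := Real.sqrt (Real.log R / 2) with ha
  have ha0 : 0 < a := Real.sqrt_pos.mpr (by linarith)
  have ha2 : a ^ 2 = Real.log R / 2 := Real.sq_sqrt (by linarith)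
  have hsR : 0 < Real.sqrt R := Real.sqrt_pos.mpr hR0
  have hsRsq : Real.sqrt R ^ 2 = R := Real.sq_sqrt hR0.le
  -- (R - R') = √R * (2a)
  have hRR' : R - R' = Real.sqrt R * (2 * a) := by
    rw [hR']
    have h1 : 2 * R * Real.log R = (Real.sqrt R * (2 * a)) ^ 2 := by
      rw [mul_pow, hsRsq, mul_pow, ha2]; ring
    rw [h1, Real.sqrt_sq (by positivity)]; ring
  -- key exponent identity
  have hexp : (R - R') ^ 2 / (4 * R) = Real.log R / 2 := by
    rw [hRR', mul_pow, hsRsq, mul_pow, ha2]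
    field_simp; ring
  -- the functions
  set f : ℝ → ℝ := fun t => Real.sqrt t / 2 - ρ / (2 * Real.sqrt t) with hf
  set f' : ℝ → ℝ := fun t => 1 / (4 * Real.sqrt t) + ρ / (4 * t * Real.sqrt t) with hf'
  set g : ℝ → ℝ := fun t => -Real.exp (-(f t) ^ 2) with hg
  set g' : ℝ → ℝ := fun t => 2 * f t * f' t * Real.exp (-(f t) ^ 2) with hg'
  have hderiv : ∀ t ∈ Set.Ici R, HasDerivAt g (g' t) t := by
    intro t ht
    have ht0 : (0:ℝ) < t := lt_of_lt_of_le hR0 ht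
    have hst : 0 < Real.sqrt t := Real.sqrt_pos.mpr ht0
    have hs : HasDerivAt Real.sqrt (1 / (2 * Real.sqrt t)) t :=
      Real.hasDerivAt_sqrt (ne_of_gt ht0)
    have hfd : HasDerivAt f (f' t) t := by
      have h1 : HasDerivAt (fun x => Real.sqrt x / 2) (1 / (4 * Real.sqrt t)) t := by
        have := hs.div_const 2
        exact this.congr_deriv (by ring)
      have h2 : HasDerivAt (fun x => ρ / (2 * Real.sqrt x))
          (-(ρ / (4 * t * Real.sqrt t))) t := by
        have hinv : HasDerivAt (fun x => (Real.sqrt x)⁻¹)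
            (-(1 / (2 * Real.sqrt t)) / (Real.sqrt t) ^ 2) t := hs.inv (ne_of_gt hst)
        have := hinv.const_mul (ρ / 2)
        have e : (fun x => ρ / (2 * Real.sqrt x)) = fun y => ρ / 2 * (Real.sqrt y)⁻¹ := by
          funext x
          rw [div_mul_eq_div_div, div_eq_mul_inv]
        rw [e]; refine this.congr_deriv ?_
        · rw [Real.sq_sqrt ht0.le]
          ring
      have := h1.sub h2
      exact this.congr_deriv (by simp only [hf']; ring)
    have hsq : HasDerivAt (fun x => -(f x) ^ 2) (-(2 * f t * f' t)) t := by
      have := (hfd.pow 2).neg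
      exact this.congr_deriv (by push_cast; ring)
    have := (hsq.exp).neg
    exact this.congr_deriv (by simp only [hg']; ring)
  -- lower bound on f on Ici R
  have hfa : ∀ t ∈ Set.Ici R, a ≤ f t := by
    intro t ht
    have ht0 : (0:ℝ) < t := lt_of_lt_of_le hR0 ht
    have hst : Real.sqrt R ≤ Real.sqrt t := Real.sqrt_le_sqrt ht
    have hst0 : 0 < Real.sqrt t := Real.sqrt_pos.mpr ht0
    have h1 : ρ / (2 * Real.sqrt t) ≤ ρ / (2 * Real.sqrt R) :=
      div_le_div_of_nonneg_left hρ0 (by positivity) (by linarith)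
    have h2 : ρ / (2 * Real.sqrt R) ≤ R' / (2 * Real.sqrt R) :=
      div_le_div_of_nonneg_right hρR' (by positivity) |>.trans_eq rfl
    have hR'eq : R' = R - Real.sqrt R * (2 * a) := by linarith [hRR']
    have hfR : Real.sqrt R / 2 - R' / (2 * Real.sqrt R) = a := by
      rw [hR'eq]
      field_simp
      nlinarith [hsRsq]
    have : f t = Real.sqrt t / 2 - ρ / (2 * Real.sqrt t) := rfl
    rw [this]
    calc a = Real.sqrt R / 2 - R' / (2 * Real.sqrt R) := hfR.symm
      _ ≤ Real.sqrt t / 2 - ρ / (2 * Real.sqrt t) := by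
          have := h1.trans h2
          linarith
  have hg'nonneg : ∀ t ∈ Set.Ioi R, 0 ≤ g' t := by
    intro t ht
    have ht' : t ∈ Set.Ici R := Set.mem_Ici.mpr (le_of_lt (Set.mem_Ioi.mp ht))
    have ht0 : (0:ℝ) < t := lt_of_lt_of_le hR0 ht'
    have hft : 0 < f t := lt_of_lt_of_le ha0 (hfa t ht')
    have hf't : 0 ≤ f' t := by
      have hst : 0 < Real.sqrt t := Real.sqrt_pos.mpr ht0
      simp only [hf']
      positivity
    simp only [hg']
    positivity
  -- tendsto g at top to 0
  have htend : Filter.Tendsto g Filter.atTop (nhds 0) := by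
    have hbase : Filter.Tendsto (fun t => Real.sqrt t / 2 - ρ / 2) Filter.atTop
        Filter.atTop := by
      apply Filter.tendsto_atTop_add_const_right
      have hsqrt : Filter.Tendsto Real.sqrt Filter.atTop Filter.atTop := by
        apply Filter.tendsto_atTop_atTop.mpr
        intro b
        exact ⟨b ^ 2, fun x hx => by
          calc b ≤ |b| := le_abs_self b
            _ = Real.sqrt (b ^ 2) := (Real.sqrt_sq_eq_abs b).symm
            _ ≤ Real.sqrt x := Real.sqrt_le_sqrt hx⟩
      exact hsqrt.atTop_div_const (by norm_num)
    have h1 : Filter.Tendsto f Filter.atTop Filter.atTop := by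
      refine Filter.tendsto_atTop_mono' _ ?_ hbase
      filter_upwards [Filter.eventually_ge_atTop (1:ℝ)] with t ht
      have hst : (1:ℝ) ≤ Real.sqrt t := by
        rw [show (1:ℝ) = Real.sqrt 1 by simp]; exact Real.sqrt_le_sqrt ht
      have : ρ / (2 * Real.sqrt t) ≤ ρ / 2 := by
        apply div_le_div_of_nonneg_left hρ0 (by norm_num) (by linarith)
      simp only [hf]; linarith
    have hsqtend : Filter.Tendsto (fun t => (f t) ^ 2) Filter.atTop Filter.atTop := by
      simpa [pow_two] using h1.atTop_mul_atTop₀ h1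
    have h2 : Filter.Tendsto (fun t => -(f t) ^ 2) Filter.atTop Filter.atBot :=
      Filter.tendsto_neg_atBot_iff.mpr hsqtend
    have h3 : Filter.Tendsto (fun t => Real.exp (-(f t) ^ 2)) Filter.atTop (nhds 0) :=
      Real.tendsto_exp_atBot.comp h2
    have := h3.neg
    simpa using this
  -- integral of g'
  have hint : ∫ t in Set.Ioi R, g' t = Real.exp (-(f R) ^ 2) := by
    have := integral_Ioi_of_hasDerivAt_of_nonneg' hderiv hg'nonneg htend
    rw [this]; simp [hg]
  have hg'integrable : IntegrableOn g' (Set.Ioi R) :=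
    integrableOn_Ioi_deriv_of_nonneg' hderiv hg'nonneg htend
  -- pointwise bound
  have hpt : ∀ t ∈ Set.Ioi R,
      (1 / Real.sqrt t) * Real.exp (-(Real.sqrt t / 2 - ρ / (2 * Real.sqrt t)) ^ 2)
      ≤ (2 / a) * g' t := by
    intro t ht
    have ht' : t ∈ Set.Ici R := Set.mem_Ici.mpr (le_of_lt (Set.mem_Ioi.mp ht))
    have ht0 : (0:ℝ) < t := lt_of_lt_of_le hR0 ht'
    have hst : 0 < Real.sqrt t := Real.sqrt_pos.mpr ht0
    have hft : a ≤ f t := hfa t ht'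
    have hf'ge : 1 / (4 * Real.sqrt t) ≤ f' t := by
      simp only [hf']
      have : 0 ≤ ρ / (4 * t * Real.sqrt t) := by positivity
      linarith
    have hePos : 0 < Real.exp (-(f t) ^ 2) := Real.exp_pos _
    have key : 1 / Real.sqrt t ≤ (2 / a) * (2 * f t * f' t) := by
      have h1 : 1 / Real.sqrt t ≤ 4 * f' t := by
        calc 1 / Real.sqrt t = 4 * (1 / (4 * Real.sqrt t)) := by field_simp
          _ ≤ 4 * f' t := by linarith
      have h2 : 4 * f' t ≤ (2 / a) * (2 * f t * f' t) := by
        have hf'0 : 0 ≤ f' t := le_trans (by positivity) hf'ge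
        have : (2 / a) * (2 * f t * f' t) = 4 * f' t * (f t / a) := by ring
        rw [this]
        have h3 : 1 ≤ f t / a := (one_le_div ha0).mpr hft
        have h4 : 4 * f' t * 1 ≤ 4 * f' t * (f t / a) :=
          mul_le_mul_of_nonneg_left h3 (by positivity)
        linarith
      linarith
    have hfeq : (Real.sqrt t / 2 - ρ / (2 * Real.sqrt t)) = f t := rfl
    rw [hfeq]
    calc (1 / Real.sqrt t) * Real.exp (-(f t) ^ 2)
        ≤ ((2 / a) * (2 * f t * f' t)) * Real.exp (-(f t) ^ 2) := by
          apply mul_le_mul_of_nonneg_right key hePos.le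
      _ = (2 / a) * g' t := by simp only [hg']; ring
  -- integrability of LHS
  have hmeas : AEStronglyMeasurable
      (fun t => (1 / Real.sqrt t) * Real.exp (-(Real.sqrt t / 2 - ρ / (2 * Real.sqrt t)) ^ 2))
      (volume.restrict (Set.Ioi R)) := by
    have m1 : Measurable fun t : ℝ => Real.sqrt t := Real.continuous_sqrt.measurable
    exact ((measurable_const.div m1).mul (Real.measurable_exp.comp
      ((((m1.div_const 2).sub (measurable_const.div (m1.const_mul 2))).pow_const 2).neg))).aestronglyMeasurable
  have hLHSint : IntegrableOn
      (fun t => (1 / Real.sqrt t) * Real.exp (-(Real.sqrt t / 2 - ρ / (2 * Real.sqrt t)) ^ 2))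
      (Set.Ioi R) := by
    apply Integrable.mono' (hg'integrable.const_mul (2 / a)) hmeas
    filter_upwards [ae_restrict_mem measurableSet_Ioi] with t ht
    have h1 := hpt t ht
    have ht' : t ∈ Set.Ici R := Set.mem_Ici.mpr (le_of_lt (Set.mem_Ioi.mp ht))
    have ht0 : (0:ℝ) < t := lt_of_lt_of_le hR0 ht'
    have hst : 0 < Real.sqrt t := Real.sqrt_pos.mpr ht0
    rw [Real.norm_eq_abs, abs_of_nonneg (by positivity)]
    exact h1
  -- main estimate
  have hmain : (∫ t in Set.Ioi R,
      (1 / Real.sqrt t) * Real.exp (-(Real.sqrt t / 2 - ρ / (2 * Real.sqrt t)) ^ 2))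
      ≤ (2 / a) * Real.exp (-(Real.log R / 2)) := by
    calc (∫ t in Set.Ioi R,
        (1 / Real.sqrt t) * Real.exp (-(Real.sqrt t / 2 - ρ / (2 * Real.sqrt t)) ^ 2))
        ≤ ∫ t in Set.Ioi R, (2 / a) * g' t := by
          apply setIntegral_mono_on hLHSint (hg'integrable.const_mul (2 / a))
            measurableSet_Ioi hpt
      _ = (2 / a) * ∫ t in Set.Ioi R, g' t := by rw [integral_const_mul]
      _ = (2 / a) * Real.exp (-(f R) ^ 2) := by rw [hint]
      _ ≤ (2 / a) * Real.exp (-(Real.log R / 2)) := by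
          apply mul_le_mul_of_nonneg_left _ (by positivity)
          apply Real.exp_le_exp.mpr
          have hfR : a ≤ f R := hfa R Set.self_mem_Ici
          have h5 : a ^ 2 ≤ f R ^ 2 := pow_le_pow_left₀ ha0.le hfR 2
          have h6 : Real.log R / 2 ≤ f R ^ 2 := ha2 ▸ h5
          linarith
  have hexp' : -(R - R') ^ 2 / (4 * R) = -(Real.log R / 2) := by
    rw [neg_div, hexp]
  constructor
  · -- inequality
    rw [hexp']
    refine hmain.trans ?_
    apply mul_le_mul_of_nonneg_right _ (Real.exp_pos _).le
    -- 2 / a ≤ 3 / √(log R)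
    have hslog : 0 < Real.sqrt (Real.log R) := Real.sqrt_pos.mpr hlogR
    rw [div_le_div_iff₀ ha0 hslog]
    have h1 : 2 * Real.sqrt (Real.log R) = Real.sqrt (4 * Real.log R) := by
      rw [show (4:ℝ) * Real.log R = 2 ^ 2 * Real.log R by ring, Real.sqrt_mul (by positivity),
        Real.sqrt_sq (by norm_num)]
    have h2 : 3 * a = Real.sqrt (9 * (Real.log R / 2)) := by
      rw [Real.sqrt_mul (by norm_num), show Real.sqrt 9 = 3 by
        rw [show (9:ℝ) = 3 ^ 2 by norm_num, Real.sqrt_sq (by norm_num)]]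
    rw [h1, h2]
    apply Real.sqrt_le_sqrt
    linarith
  · -- equality
    rw [hexp']
    have hexpR : Real.exp (-(Real.log R / 2)) = (Real.sqrt R)⁻¹ := by
      rw [← Real.log_sqrt hR0.le, Real.exp_neg, Real.exp_log hsR]
    rw [hexpR]
    field_simp
end
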